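/- Let K be a field, r a positive integer, and V a finite-dimensional K-vector space which is the internal direct sum of subspaces (V_m)_{m ∈ ℤ/rℤ}, all of the same dimension. Let F : V → V be a K-linear endomorphism with F(V_m) ⊆ V_{m+1} for all m ∈ ℤ/rℤ. Then F^r maps V_0 into itself, and the characteristic polynomial of F on V equals the composition q(X^r), where q is the characteristic polynomial of the restriction of F^r to V_0. -/

import Mathlib

open Matrix Polynomial

namespace Stmt7Aux

variable {L : Type*} [Field L] {ι : Type*} [Fintype ι] [DecidableEq ι]

section CyclicDet

variable {k : ℕ} [NeZero k]

lemma val_sub_one {a : ZMod k} (ha : a ≠ 0) : (a - 1).val = a.val - 1 := by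
  have h1 : 1 ≤ a.val := Nat.one_le_iff_ne_zero.mpr fun h => ha ((ZMod.val_eq_zero a).mp h)
  have h2 : ((a.val - 1 : ℕ) : ZMod k) = a - 1 := by
    rw [Nat.cast_sub h1, Nat.cast_one, ZMod.natCast_zmod_val]
  rw [← h2, ZMod.val_cast_of_lt]
  exact lt_of_le_of_lt (Nat.sub_le _ _) (ZMod.val_lt a)

variable (u : L) (M : Matrix (ZMod k × ι) (ZMod k × ι) L)

lemma pow_supp (hM : ∀ (a b : ZMod k) (i j : ι), a ≠ b + 1 → M (a, i) (b, j) = 0)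
    (s : ℕ) : ∀ (a b : ZMod k) (i j : ι), a ≠ b + (s : ZMod k) → (M ^ s) (a, i) (b, j) = 0 := by
  induction s with
  | zero =>
    intro a b i j hab
    simp only [Nat.cast_zero, add_zero] at hab
    rw [pow_zero]
    exact Matrix.one_apply_ne fun h => hab (congrArg Prod.fst h)
  | succ s ih =>
    intro a b i j hab
    rw [pow_succ', Matrix.mul_apply]
    apply Finset.sum_eq_zero
    rintro ⟨c, l⟩ -
    by_cases hc : a = c + 1
    · have hcb : c ≠ b + (s : ZMod k) := by
        intro h; apply hab; rw [hc, h]; push_cast; ring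
      rw [ih _ _ _ _ hcb, mul_zero]
    · rw [hM _ _ _ _ hc, zero_mul]

/-- The triangular matrix used to conjugate `u•1 - M` into block triangular form. -/
def W : Matrix (ZMod k × ι) (ZMod k × ι) L :=
  Matrix.of fun p q =>
    if q.1.val ≤ p.1.val then u⁻¹ ^ (p.1.val - q.1.val) * (M ^ (p.1.val - q.1.val)) p q else 0

lemma W_apply (p q : ZMod k × ι) :
    W u M p q =
      if q.1.val ≤ p.1.val then u⁻¹ ^ (p.1.val - q.1.val) * (M ^ (p.1.val - q.1.val)) p q
      else 0 := rfl

lemma det_W : (W u M).det = 1 := by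
  have hbt : (W u M).BlockTriangular fun p => (k : ℤ) - p.1.val := by
    intro p q h
    have h' : (k : ℤ) - q.1.val < (k : ℤ) - p.1.val := h
    rw [W_apply, if_neg]
    omega
  rw [hbt.det]
  apply Finset.prod_eq_one
  intro a _
  have h1 : (W u M).toSquareBlock (fun p => (k : ℤ) - p.1.val) a = 1 := by
    ext ⟨p, hp⟩ ⟨q, hq⟩
    have hval : p.1.val = q.1.val := by
      have hp' : (k : ℤ) - p.1.val = a := hp
      have hq' : (k : ℤ) - q.1.val = a := hq
      omega
    show W u M p q = _
    rw [W_apply, if_pos (le_of_eq hval.symm)]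
    have hz : p.1.val - q.1.val = 0 := by omega
    rw [hz, pow_zero, pow_zero, one_mul]
    by_cases h : p = q
    · subst h; simp [Matrix.one_apply]
    · rw [Matrix.one_apply_ne h, Matrix.one_apply_ne fun hh => h (Subtype.ext_iff.mp hh)]
  rw [h1, det_one]

lemma mul_pow_entry (hM : ∀ (a b : ZMod k) (i j : ι), a ≠ b + 1 → M (a, i) (b, j) = 0)
    (t : ℕ) (a b : ZMod k) (i j : ι) :
    (M ^ (t + 1)) (a, i) (b, j) = ∑ l : ι, M (a, i) (a - 1, l) * (M ^ t) (a - 1, l) (b, j) := by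
  rw [pow_succ', Matrix.mul_apply, Fintype.sum_prod_type]
  rw [Finset.sum_eq_single (a - 1)]
  · intro c _ hc
    apply Finset.sum_eq_zero; intro l _
    rw [hM a c i l (fun h => hc (by rw [h, add_sub_cancel_right])), zero_mul]
  · intro h; exact absurd (Finset.mem_univ _) h

lemma MW_entry (hM : ∀ (a b : ZMod k) (i j : ι), a ≠ b + 1 → M (a, i) (b, j) = 0)
    (a b : ZMod k) (i j : ι) :
    (M * W u M) (a, i) (b, j) =
      if b.val ≤ (a - 1).val then
        u⁻¹ ^ ((a - 1).val - b.val) * (M ^ ((a - 1).val - b.val + 1)) (a, i) (b, j)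
      else 0 := by
  rw [Matrix.mul_apply, Fintype.sum_prod_type]
  rw [Finset.sum_eq_single (a - 1)]
  · by_cases hcond : b.val ≤ (a - 1).val
    · rw [if_pos hcond]
      have hW : ∀ l : ι, W u M (a - 1, l) (b, j) =
          u⁻¹ ^ ((a - 1).val - b.val) * (M ^ ((a - 1).val - b.val)) (a - 1, l) (b, j) :=
        fun l => by rw [W_apply, if_pos hcond]
      simp only [hW]
      rw [mul_pow_entry M hM, Finset.mul_sum]
      congr 1; funext l; ring
    · rw [if_neg hcond]
      apply Finset.sum_eq_zero; intro l _
      have hW : W u M (a - 1, l) (b, j) = 0 := by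
        rw [W_apply, if_neg hcond]
      rw [hW, mul_zero]
  · intro c _ hc
    apply Finset.sum_eq_zero; intro l _
    rw [hM a c i l (fun h => hc (by rw [h, add_sub_cancel_right])), zero_mul]
  · intro h; exact absurd (Finset.mem_univ _) h

lemma N_offdiag (hu : u ≠ 0)
    (hM : ∀ (a b : ZMod k) (i j : ι), a ≠ b + 1 → M (a, i) (b, j) = 0)
    {a b : ZMod k} (i j : ι) (ha : a ≠ 0) (hab : a ≠ b) :
    (u • W u M - M * W u M) (a, i) (b, j) = 0 := by
  have ha1 : (a - 1).val = a.val - 1 := val_sub_one ha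
  have hav : 1 ≤ a.val := Nat.one_le_iff_ne_zero.mpr fun h => ha ((ZMod.val_eq_zero a).mp h)
  rw [Matrix.sub_apply, Matrix.smul_apply, MW_entry u M hM]
  by_cases hle : b.val ≤ a.val
  · have hlt : b.val < a.val :=
      lt_of_le_of_ne hle fun h => hab (ZMod.val_injective k h.symm)
    have hWa : W u M (a, i) (b, j) =
        u⁻¹ ^ (a.val - b.val) * (M ^ (a.val - b.val)) (a, i) (b, j) := by
      rw [W_apply, if_pos hle]
    rw [hWa, if_pos (by omega : b.val ≤ (a - 1).val)]
    have he1 : (a - 1).val - b.val = (a.val - b.val) - 1 := by omega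
    have he2 : (a.val - b.val) - 1 + 1 = a.val - b.val := by omega
    rw [he1, he2]
    have hu2 : u * u⁻¹ ^ (a.val - b.val) = u⁻¹ ^ (a.val - b.val - 1) := by
      obtain ⟨d, hd⟩ : ∃ d, a.val - b.val = d + 1 := ⟨a.val - b.val - 1, by omega⟩
      rw [hd, Nat.add_sub_cancel, pow_succ', ← mul_assoc, mul_inv_cancel₀ hu, one_mul]
    rw [smul_eq_mul, ← mul_assoc, hu2, sub_self]
  · have hWa : W u M (a, i) (b, j) = 0 := by
      rw [W_apply, if_neg hle]
    rw [hWa, smul_zero, if_neg (by omega), sub_zero]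

lemma N_diag
    (hM : ∀ (a b : ZMod k) (i j : ι), a ≠ b + 1 → M (a, i) (b, j) = 0)
    {a : ZMod k} (i j : ι) (ha : a ≠ 0) :
    (u • W u M - M * W u M) (a, i) (a, j) = if i = j then u else 0 := by
  have ha1 : (a - 1).val = a.val - 1 := val_sub_one ha
  have hav : 1 ≤ a.val := Nat.one_le_iff_ne_zero.mpr fun h => ha ((ZMod.val_eq_zero a).mp h)
  rw [Matrix.sub_apply, Matrix.smul_apply, MW_entry u M hM, if_neg (by omega), sub_zero]
  have hWa : W u M (a, i) (a, j) = (1 : Matrix (ZMod k × ι) (ZMod k × ι) L) (a, i) (a, j) := by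
    rw [W_apply, if_pos le_rfl, Nat.sub_self, pow_zero, pow_zero, one_mul]
  rw [hWa, Matrix.one_apply, smul_eq_mul, mul_ite, mul_one, mul_zero]
  by_cases hij : i = j <;> simp [hij]

lemma N_zero
    (hM : ∀ (a b : ZMod k) (i j : ι), a ≠ b + 1 → M (a, i) (b, j) = 0)
    (i j : ι) :
    (u • W u M - M * W u M) ((0 : ZMod k), i) (0, j) =
      (if i = j then u else 0) - u⁻¹ ^ (k - 1) * (M ^ k) ((0 : ZMod k), i) (0, j) := by
  obtain ⟨k', rfl⟩ := Nat.exists_eq_succ_of_ne_zero (NeZero.ne k)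
  have hval : ((0 : ZMod (k' + 1)) - 1).val = k' := by
    rw [zero_sub]; exact ZMod.val_neg_one k'
  rw [Matrix.sub_apply, Matrix.smul_apply, MW_entry u M hM]
  rw [if_pos (by rw [hval, ZMod.val_zero]; exact Nat.zero_le _)]
  have hWa : W u M ((0 : ZMod (k' + 1)), i) (0, j) =
      (1 : Matrix (ZMod (k' + 1) × ι) (ZMod (k' + 1) × ι) L) (0, i) (0, j) := by
    rw [W_apply, if_pos le_rfl, Nat.sub_self, pow_zero, pow_zero, one_mul]
  rw [hWa, Matrix.one_apply, smul_eq_mul, mul_ite, mul_one, mul_zero]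
  rw [hval, ZMod.val_zero, Nat.sub_zero]
  simp only [Nat.succ_eq_add_one, Nat.add_sub_cancel]
  by_cases hij : i = j <;> simp [hij]

lemma main_det (hu : u ≠ 0)
    (hM : ∀ (a b : ZMod k) (i j : ι), a ≠ b + 1 → M (a, i) (b, j) = 0) :
    (u • (1 : Matrix (ZMod k × ι) (ZMod k × ι) L) - M).det =
      ((u ^ k) • (1 : Matrix ι ι L) -
        Matrix.of fun i j => (M ^ k) ((0 : ZMod k), i) ((0 : ZMod k), j)).det := by
  classical
  set P : Matrix ι ι L := Matrix.of fun i j => (M ^ k) ((0 : ZMod k), i) ((0 : ZMod k), j)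
    with hPdef
  set N : Matrix (ZMod k × ι) (ZMod k × ι) L := u • W u M - M * W u M with hNdef
  have hfac : (u • (1 : Matrix (ZMod k × ι) (ZMod k × ι) L) - M) * W u M = N := by
    rw [hNdef, sub_mul, smul_mul_assoc, one_mul]
  have hdet1 : (u • (1 : Matrix (ZMod k × ι) (ZMod k × ι) L) - M).det = N.det := by
    rw [← hfac, det_mul, det_W, mul_one]
  -- equivalence for the 0-block
  let e : ι ≃ {x : ZMod k × ι // x.1 = 0} :=
    { toFun := fun i => ⟨(0, i), rfl⟩
      invFun := fun x => x.1.2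
      left_inv := fun i => rfl
      right_inv := fun x => by
        rcases x with ⟨⟨a, i⟩, h⟩
        simp only at h
        subst h
        rfl }
  have hblock : ∀ x : ZMod k × ι, ¬x.1 = 0 → ∀ y : ZMod k × ι, y.1 = 0 → N x y = 0 := by
    rintro ⟨a, i⟩ ha ⟨b, j⟩ hb
    simp only at ha hb
    subst hb
    exact N_offdiag u M hu hM i j ha ha
  have hdetN := Matrix.twoBlockTriangular_det N (fun x => x.1 = 0) hblock
  have hb1 : (N.toSquareBlockProp fun x : ZMod k × ι => x.1 = 0).det =
      (u • (1 : Matrix ι ι L) - (u⁻¹ ^ (k - 1)) • P).det := by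
    rw [← Matrix.det_submatrix_equiv_self e]
    congr 1
    ext i j
    show N ((0 : ZMod k), i) (0, j) = _
    rw [hNdef, N_zero u M hM]
    simp only [Matrix.sub_apply, Matrix.smul_apply, Matrix.one_apply, hPdef, Matrix.of_apply,
      smul_eq_mul, mul_ite, mul_one, mul_zero]
  have hb2 : (N.toSquareBlockProp fun x : ZMod k × ι => ¬x.1 = 0).det =
      u ^ ((k - 1) * Fintype.card ι) := by
    have heq : (N.toSquareBlockProp fun x : ZMod k × ι => ¬x.1 = 0) =
        u • (1 : Matrix {x : ZMod k × ι // ¬x.1 = 0} {x : ZMod k × ι // ¬x.1 = 0} L) := by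
      ext ⟨⟨a, i⟩, ha⟩ ⟨⟨b, j⟩, hb⟩
      simp only at ha hb
      show N (a, i) (b, j) = _
      by_cases hab : a = b
      · subst hab
        rw [hNdef, N_diag u M hM i j ha, Matrix.smul_apply, Matrix.one_apply, smul_eq_mul,
          mul_ite, mul_one, mul_zero]
        by_cases hij : i = j
        · subst hij; rw [if_pos rfl, if_pos rfl]
        · rw [if_neg hij, if_neg (by simp [Subtype.ext_iff, Prod.ext_iff, hij])]
      · rw [hNdef, N_offdiag u M hu hM i j ha hab, Matrix.smul_apply,
          Matrix.one_apply_ne (by simp [Subtype.ext_iff, Prod.ext_iff, hab]), smul_zero]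
    rw [heq, Matrix.det_smul, det_one, mul_one]
    congr 1
    have hcard0 : Fintype.card {x : ZMod k × ι // x.1 = 0} = Fintype.card ι :=
      (Fintype.card_congr e).symm
    rw [Fintype.card_subtype_compl, hcard0, Fintype.card_prod, ZMod.card]
    have hk := NeZero.pos k
    cases k with
    | zero => omega
    | succ k' => rw [Nat.succ_sub_one]; ring_nf; omega
  have hsm : (u ^ (k - 1)) • (u • (1 : Matrix ι ι L) - (u⁻¹ ^ (k - 1)) • P) =
      (u ^ k) • (1 : Matrix ι ι L) - P := by
    rw [smul_sub, smul_smul, smul_smul]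
    congr 1
    · congr 1
      rw [← pow_succ]
      congr 1
      have := NeZero.pos k
      omega
    · rw [← mul_pow, mul_inv_cancel₀ hu, one_pow, one_smul]
  have hfin : ((u ^ k) • (1 : Matrix ι ι L) - P).det =
      u ^ ((k - 1) * Fintype.card ι) * (u • (1 : Matrix ι ι L) - (u⁻¹ ^ (k - 1)) • P).det := by
    rw [← hsm, Matrix.det_smul, ← pow_mul]
  rw [hdet1, hdetN, hb1, hb2, hfin, mul_comm]

end CyclicDet

lemma charmatrix_map_ringHom {R S : Type*} [CommRing R] [CommRing S] {ι' : Type*}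
    [Fintype ι'] [DecidableEq ι'] (A : Matrix ι' ι' R) (ψ : R[X] →+* S) :
    (charmatrix A).map ψ = ψ X • (1 : Matrix ι' ι' S) - A.map (ψ.comp C) := by
  ext i j
  by_cases h : i = j
  · subst h
    simp only [Matrix.map_apply, charmatrix_apply_eq, map_sub, Matrix.sub_apply,
      Matrix.smul_apply, Matrix.one_apply_eq, smul_eq_mul, mul_one, RingHom.comp_apply]
  · simp only [Matrix.map_apply, charmatrix_apply_ne _ _ _ h, map_neg, Matrix.sub_apply,
      Matrix.smul_apply, Matrix.one_apply_ne h, smul_eq_mul, mul_zero, RingHom.comp_apply,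
      zero_sub]

end Stmt7Aux

set_option maxHeartbeats 2000000 in
set_option synthInstance.maxHeartbeats 400000 in
/-- If `V` is the internal direct sum of subspaces `(V_m)_{m ∈ ℤ/rℤ}`, all of the same
dimension, and `F` is an endomorphism with `F(V_m) ⊆ V_{m+1}` for all `m`, then `F^r`
maps `V_0` into itself and the characteristic polynomial of `F` equals `q(X^r)`, where
`q` is the characteristic polynomial of the restriction of `F^r` to `V_0`. -/
theorem stmt7 (K : Type*) [Field K] (V : Type*) [AddCommGroup V] [Module K V]
    [FiniteDimensional K V]
    (r : ℕ) (hr : 0 < r) (Vm : ZMod r → Submodule K V)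
    (hint : DirectSum.IsInternal Vm)
    (hdim : ∀ m m' : ZMod r, Module.finrank K (Vm m) = Module.finrank K (Vm m'))
    (F : Module.End K V) (hF : ∀ m : ZMod r, Submodule.map F (Vm m) ≤ Vm (m + 1)) :
    ∃ h : ∀ x ∈ Vm 0, (F ^ r) x ∈ Vm 0,
      LinearMap.charpoly (F : V →ₗ[K] V) =
        (LinearMap.charpoly ((F ^ r : Module.End K V).restrict h)).comp
          (Polynomial.X ^ r) := by
  classical
  haveI : NeZero r := ⟨hr.ne'⟩
  open Matrix Polynomial Stmt7Aux in
  -- `F^s` maps `Vm m` into `Vm (m + s)`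
  have hpow : ∀ (s : ℕ) (m : ZMod r) (x : V), x ∈ Vm m → (F ^ s) x ∈ Vm (m + s) := by
    intro s
    induction s with
    | zero => intro m x hx; simpa using hx
    | succ s ih =>
      intro m x hx
      have h1 : (F ^ (s + 1)) x = F ((F ^ s) x) := by
        rw [pow_succ', Module.End.mul_apply]
      rw [h1]
      have h2 : F ((F ^ s) x) ∈ Vm (m + s + 1) :=
        hF (m + s) ⟨(F ^ s) x, ih m x hx, rfl⟩
      convert h2 using 2
      push_cast
      ring
  have h : ∀ x ∈ Vm 0, (F ^ r) x ∈ Vm 0 := by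
    intro x hx
    have := hpow r 0 x hx
    simpa [ZMod.natCast_self] using this
  refine ⟨h, ?_⟩
  set n := Module.finrank K (Vm 0) with hn
  let bas : ∀ m : ZMod r, Module.Basis (Fin n) K (Vm m) :=
    fun m => Module.finBasisOfFinrankEq K (Vm m) (hdim m 0)
  let e : (Σ _ : ZMod r, Fin n) ≃ ZMod r × Fin n := Equiv.sigmaEquivProd (ZMod r) (Fin n)
  let B : Module.Basis (ZMod r × Fin n) K V := (hint.collectedBasis bas).reindex e
  have hBrepr : ∀ (v : V) (m : ZMod r) (i : Fin n),
      B.repr v (m, i) = (hint.collectedBasis bas).repr v ⟨m, i⟩ := by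
    intro v m i
    show ((hint.collectedBasis bas).reindex e).repr v (m, i) = _
    rw [Module.Basis.repr_reindex_apply]
    rfl
  have hBapp : ∀ (m : ZMod r) (i : Fin n), B (m, i) = (bas m i : V) := by
    intro m i
    show ((hint.collectedBasis bas).reindex e) (m, i) = _
    rw [Module.Basis.reindex_apply, hint.collectedBasis_coe bas]
    rfl
  set Mat : Matrix (ZMod r × Fin n) (ZMod r × Fin n) K := LinearMap.toMatrix B B F with hMat
  have key : ∀ (a b : ZMod r) (i j : Fin n), a ≠ b + 1 → Mat (a, i) (b, j) = 0 := by
    intro a b i j hab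
    have hmem : F (B (b, j)) ∈ Vm (b + 1) := by
      apply hF b
      refine ⟨B (b, j), ?_, rfl⟩
      rw [hBapp b j]
      exact (bas b j).2
    show LinearMap.toMatrix B B F (a, i) (b, j) = 0
    rw [LinearMap.toMatrix_apply, hBrepr]
    exact hint.collectedBasis_repr_of_mem_ne bas (Ne.symm hab) hmem
  set Pmat : Matrix (Fin n) (Fin n) K :=
    Matrix.of fun i j => (Mat ^ r) ((0 : ZMod r), i) ((0 : ZMod r), j) with hPmat
  have hP : Pmat = LinearMap.toMatrix (bas 0) (bas 0) ((F ^ r).restrict h) := by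
    ext i j
    show (Mat ^ r) ((0 : ZMod r), i) ((0 : ZMod r), j) = _
    rw [hMat, LinearMap.toMatrix_pow, LinearMap.toMatrix_apply, hBrepr, hBapp 0 j]
    have hmem : (F ^ r) (bas 0 j : V) ∈ Vm 0 := h _ (bas 0 j).2
    rw [hint.collectedBasis_repr_of_mem bas hmem, LinearMap.toMatrix_apply]
    have hsub : (⟨(F ^ r) ((bas 0) j : V), hmem⟩ : Vm 0) = (F ^ r).restrict h (bas 0 j) :=
      Subtype.ext rfl
    rw [hsub]
  rw [← LinearMap.charpoly_toMatrix F B,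
    ← LinearMap.charpoly_toMatrix ((F ^ r).restrict h) (bas 0), ← hP, ← hMat]
  -- Now: Mat.charpoly = Pmat.charpoly.comp (X ^ r); pass to RatFunc K
  have hinj : Function.Injective (algebraMap (Polynomial K) (RatFunc K)) :=
    IsFractionRing.injective _ _
  apply hinj
  set φ : Polynomial K →+* RatFunc K :=
    (algebraMap (Polynomial K) (RatFunc K) : Polynomial K →+* RatFunc K) with hφ
  set ψ : K →+* RatFunc K := φ.comp (C : K →+* Polynomial K) with hψ
  have hu : φ X ≠ 0 := fun h0 => Polynomial.X_ne_zero (hinj (by rw [h0]; simp))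
  have hM' : ∀ (a b : ZMod r) (i j : Fin n), a ≠ b + 1 → (Mat.map ψ) (a, i) (b, j) = 0 := by
    intro a b i j hab
    show ψ (Mat (a, i) (b, j)) = 0
    rw [key a b i j hab, map_zero]
  have hmd := Stmt7Aux.main_det (φ X) (Mat.map ψ) hu hM'
  have hpowmap : (Mat.map ψ) ^ r = (Mat ^ r).map ψ := by
    have h2 := map_pow
      (ψ.mapMatrix : Matrix (ZMod r × Fin n) (ZMod r × Fin n) K →+* _) Mat r
    simpa [RingHom.mapMatrix_apply] using h2.symm
  have hof : (Matrix.of fun i j =>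
      ((Mat.map ψ) ^ r) ((0 : ZMod r), i) ((0 : ZMod r), j)) = Pmat.map ψ := by
    ext i j
    show ((Mat.map ψ) ^ r) ((0 : ZMod r), i) ((0 : ZMod r), j) = ψ (Pmat i j)
    rw [hpowmap]
    rfl
  have hL : φ Mat.charpoly =
      ((φ X) • (1 : Matrix (ZMod r × Fin n) (ZMod r × Fin n) (RatFunc K)) - Mat.map ψ).det := by
    rw [Matrix.charpoly, RingHom.map_det, RingHom.mapMatrix_apply, Stmt7Aux.charmatrix_map_ringHom]
  set χ : Polynomial K →+* RatFunc K :=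
    φ.comp (eval₂RingHom (C : K →+* Polynomial K) (X ^ r)) with hχ
  have hcomp : ∀ p : Polynomial K, φ (p.comp (X ^ r)) = χ p := fun p => rfl
  have hχX : χ X = (φ X) ^ r := by
    rw [hχ, RingHom.comp_apply, coe_eval₂RingHom, eval₂_X, map_pow]
  have hχC : χ.comp (C : K →+* Polynomial K) = ψ := by
    ext a
    rw [hψ, RingHom.comp_apply, RingHom.comp_apply, RingHom.comp_apply, coe_eval₂RingHom, eval₂_C]
  have hR : φ (Pmat.charpoly.comp (X ^ r)) =
      ((φ X) ^ r • (1 : Matrix (Fin n) (Fin n) (RatFunc K)) - Pmat.map ψ).det := by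
    rw [hcomp, Matrix.charpoly, RingHom.map_det, RingHom.mapMatrix_apply,
      Stmt7Aux.charmatrix_map_ringHom, hχX, hχC]
  rw [hL, hR, hmd, hof]
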